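/- Every nilpotent Lie ring R with |R| > 4 is not a UA-Lie ring. -/

import Mathlib

lemma card_escape {R : Type u} [LieRing R] (h : 4 < Cardinal.mk R)
    (p q r s : R) : ∃ x : R, x ≠ p ∧ x ≠ q ∧ x ≠ r ∧ x ≠ s := by
  by_contra hc
  push_neg at hc
  have hsub : (Set.univ : Set R) ⊆ ({p, q, r, s} : Set R) := by
    intro x _
    have := hc x
    simp only [Set.mem_insert_iff, Set.mem_singleton_iff]
    tauto
  have h1 : Cardinal.mk R = Cardinal.mk (Set.univ : Set R) := (Cardinal.mk_univ).symm
  have h2 : Cardinal.mk (Set.univ : Set R) ≤ Cardinal.mk ({p, q, r, s} : Set R) :=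
    Cardinal.mk_le_mk_of_subset hsub
  have h3 : Cardinal.mk ({p, q, r, s} : Set R) ≤ 4 := by
    calc Cardinal.mk ({p, q, r, s} : Set R)
        ≤ Cardinal.mk ({q, r, s} : Set R) + 1 := Cardinal.mk_insert_le
      _ ≤ (Cardinal.mk ({r, s} : Set R) + 1) + 1 := by
          gcongr; exact Cardinal.mk_insert_le
      _ ≤ ((Cardinal.mk ({s} : Set R) + 1) + 1) + 1 := by
          gcongr; exact Cardinal.mk_insert_le
      _ = 4 := by rw [Cardinal.mk_singleton]; norm_num
  have := lt_of_lt_of_le h (h1 ▸ le_trans h2 h3)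
  exact absurd this (lt_irrefl _)

lemma key_za (R : Type u) [LieRing R] [LieModule.IsNilpotent R R]
    (h : 4 < Cardinal.mk R) :
    ∃ z a : R, z ≠ 0 ∧ (∀ w : R, ⁅w, z⁆ = 0) ∧
      (∀ x y : R, ⁅x, y⁆ ≠ a) ∧ (∀ x y : R, ⁅x, y⁆ ≠ a + z) := by
  have hnt : Nontrivial R := by
    rw [← Cardinal.one_lt_iff_nontrivial]
    exact lt_trans (by norm_num) h
  have hnil := (LieModule.isNilpotent_iff ℤ R R).mp inferInstance
  by_cases hab : ∀ x y : R, ⁅x, y⁆ = (0 : R)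
  · -- abelian case
    obtain ⟨z, hz⟩ := exists_ne (0 : R)
    obtain ⟨a, ha1, ha2, -, -⟩ := card_escape h 0 (-z) 0 0
    refine ⟨z, a, hz, fun w => hab w z, fun x y => ?_, fun x y => ?_⟩
    · rw [hab]; exact fun e => ha1 e.symm
    · rw [hab]; intro e
      apply ha2
      rw [eq_neg_iff_add_eq_zero, ← e]
  · -- non-abelian case
    push_neg at hab
    classical
    have hcomm : ∀ x y : R, ⁅x, y⁆ ∈ LieModule.lowerCentralSeries ℤ R R 1 := by
      intro x y
      rw [show (1 : ℕ) = 0 + 1 from rfl, LieModule.lowerCentralSeries_succ,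
        LieModule.lowerCentralSeries_zero]
      exact LieSubmodule.lie_mem_lie (LieSubmodule.mem_top x) (LieSubmodule.mem_top y)
    have hex : ∃ k, LieModule.lowerCentralSeries ℤ R R k = ⊥ := hnil
    let k := Nat.find hex
    have hk : LieModule.lowerCentralSeries ℤ R R k = ⊥ := Nat.find_spec hex
    have hk2 : 2 ≤ k := by
      by_contra hlt
      push_neg at hlt
      interval_cases k
      · rw [LieModule.lowerCentralSeries_zero] at hk
        obtain ⟨u, v, huv⟩ := exists_pair_ne R
        apply huv
        have hu : u ∈ (⊥ : LieSubmodule ℤ R R) := hk ▸ LieSubmodule.mem_top u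
        have hv : v ∈ (⊥ : LieSubmodule ℤ R R) := hk ▸ LieSubmodule.mem_top v
        rw [LieSubmodule.mem_bot] at hu hv
        rw [hu, hv]
      · obtain ⟨x, y, hxy⟩ := hab
        apply hxy
        have := hcomm x y
        rw [hk, LieSubmodule.mem_bot] at this
        exact this
    -- z : nonzero element of lcs (k-1)
    have hlt : k - 1 < k := by omega
    have hne : LieModule.lowerCentralSeries ℤ R R (k - 1) ≠ ⊥ := Nat.find_min hex hlt
    rw [Ne, LieSubmodule.eq_bot_iff] at hne
    push_neg at hne
    obtain ⟨z, hzmem, hz0⟩ := hne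
    have hzcent : ∀ w : R, ⁅w, z⁆ = 0 := by
      intro w
      have : ⁅w, z⁆ ∈ LieModule.lowerCentralSeries ℤ R R ((k - 1) + 1) := by
        rw [LieModule.lowerCentralSeries_succ]
        exact LieSubmodule.lie_mem_lie (LieSubmodule.mem_top w) hzmem
      rw [show k - 1 + 1 = k by omega, hk, LieSubmodule.mem_bot] at this
      exact this
    have hz1 : z ∈ LieModule.lowerCentralSeries ℤ R R 1 :=
      LieModule.antitone_lowerCentralSeries ℤ R R (by omega : 1 ≤ k - 1) hzmem
    -- proper derived submodule
    have hprop : LieModule.lowerCentralSeries ℤ R R 1 ≠ ⊤ := by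
      intro htop
      have hall : ∀ n, LieModule.lowerCentralSeries ℤ R R n = ⊤ := by
        intro n
        induction n with
        | zero => exact LieModule.lowerCentralSeries_zero ℤ R R
        | succ n ih =>
          rw [LieModule.lowerCentralSeries_succ, ih]
          have h10 : LieModule.lowerCentralSeries ℤ R R 1 =
              ⁅(⊤ : LieIdeal ℤ R), (⊤ : LieSubmodule ℤ R R)⁆ := by
            rw [show (1 : ℕ) = 0 + 1 from rfl, LieModule.lowerCentralSeries_succ,
              LieModule.lowerCentralSeries_zero]
          rw [← h10, htop]
      have := hall k
      rw [hk] at this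
      obtain ⟨u, v, huv⟩ := exists_pair_ne R
      apply huv
      have hu : u ∈ (⊥ : LieSubmodule ℤ R R) := this ▸ LieSubmodule.mem_top u
      have hv : v ∈ (⊥ : LieSubmodule ℤ R R) := this ▸ LieSubmodule.mem_top v
      rw [LieSubmodule.mem_bot] at hu hv
      rw [hu, hv]
    have hex_a : ∃ a : R, a ∉ LieModule.lowerCentralSeries ℤ R R 1 := by
      by_contra hc
      push_neg at hc
      apply hprop; ext x; simp only [LieSubmodule.mem_top, iff_true]; exact hc x
    obtain ⟨a, ha⟩ := hex_a
    refine ⟨z, a, hz0, hzcent, fun x y he => ha (he ▸ hcomm x y), fun x y he => ?_⟩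
    have : a = ⁅x, y⁆ - z := by rw [he]; abel
    apply ha
    rw [this]
    exact sub_mem (hcomm x y) hz1

theorem stmt_8 (R : Type u) [LieRing R] [LieModule.IsNilpotent R R]
    (hcard : 4 < Cardinal.mk R) :
    ∃ (S : Type u) (_ : LieRing S) (α : R → S),
      Function.Bijective α ∧ (∀ x y : R, α ⁅x, y⁆ = ⁅α x, α y⁆) ∧
      ¬ (∀ x y : R, α (x + y) = α x + α y) := by
  classical
  obtain ⟨z, a, hz0, hzc, hCa, hCb⟩ := key_za R hcard
  have hzc' : ∀ w : R, ⁅z, w⁆ = 0 := by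
    intro w
    rw [← lie_skew, hzc, neg_zero]
  set b := a + z with hb
  have hab : a ≠ b := by
    intro e
    apply hz0
    have := e
    rw [hb, left_eq_add] at this
    exact this
  set α := (Equiv.swap a b : Equiv.Perm R) with hα
  -- bracket rigidity: swapping only changes arguments by ±z which is central
  have hlie : ∀ x y : R, ⁅α x, α y⁆ = ⁅x, y⁆ := by
    have hx : ∀ x y : R, ⁅α x, y⁆ = ⁅x, y⁆ := by
      intro x y
      by_cases h1 : x = a
      · subst h1
        rw [hα, Equiv.swap_apply_left, hb, add_lie, hzc', add_zero]
      by_cases h2 : x = b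
      · subst h2
        rw [hα, Equiv.swap_apply_right, hb, add_lie, hzc', add_zero]
      · rw [hα, Equiv.swap_apply_of_ne_of_ne h1 h2]
    have hy : ∀ x y : R, ⁅x, α y⁆ = ⁅x, y⁆ := by
      intro x y
      by_cases h1 : y = a
      · subst h1
        rw [hα, Equiv.swap_apply_left, hb, lie_add, hzc, add_zero]
      by_cases h2 : y = b
      · subst h2
        rw [hα, Equiv.swap_apply_right, hb, lie_add, hzc, add_zero]
      · rw [hα, Equiv.swap_apply_of_ne_of_ne h1 h2]
    intro x y
    rw [hx, hy]
  refine ⟨R, inferInstance, α, α.bijective, ?_, ?_⟩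
  · intro x y
    rw [hlie x y, hα, Equiv.swap_apply_of_ne_of_ne (hCa x y) (hCb x y)]
  · intro hadd
    obtain ⟨x, hx1, hx2, hx3, hx4⟩ := card_escape hcard a b 0 (-z)
    have hax : a - x ≠ a := by
      intro e; apply hx3; have := e; rwa [sub_eq_self] at this
    have hbx : a - x ≠ b := by
      intro e
      apply hx4
      rw [hb] at e
      have : a - x - a = z := by rw [e]; abel
      rw [show a - x - a = -x by abel] at this
      rw [← this, neg_neg]
    have h1 : α (x + (a - x)) = α x + α (a - x) := hadd x (a - x)
    rw [show x + (a - x) = a by abel] at h1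
    rw [hα, Equiv.swap_apply_left, Equiv.swap_apply_of_ne_of_ne hx1 hx2,
      Equiv.swap_apply_of_ne_of_ne hax hbx, show x + (a - x) = a by abel] at h1
    exact hab h1.symm
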